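/- Let G be a gyrogroup with at least three distinct elements. If the right nucleus N_r(G) = {c ∈ G : gyr[a,b]c = c for all a, b ∈ G} is nontrivial (i.e., contains a nonidentity element), then the geometry (G, Γ_m) is not n-transitive for all n ≥ 2. -/

import Mathlib

/-- A gyrogroup: a set with a binary operation `op`, a left identity `e`, left inverses
`inv`, and gyroautomorphisms `gyr a b` (bijective and operation-preserving) satisfying the
left gyroassociative law and the left loop property. -/
class Gyrogroup (G : Type*) where
  /-- the gyrogroup operation `⊕` -/
  op : G → G → G
  /-- the identity element -/
  e : G
  /-- the inverse `⊖a` -/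
  inv : G → G
  /-- (G1) `e ⊕ a = a` -/
  op_e : ∀ a : G, op e a = a
  /-- (G2) `⊖a ⊕ a = e` -/
  op_inv : ∀ a : G, op (inv a) a = e
  /-- the gyroautomorphism `gyr[a, b]` -/
  gyr : G → G → G → G
  /-- (G3) `gyr[a, b]` is bijective -/
  gyr_bijective : ∀ a b : G, Function.Bijective (gyr a b)
  /-- (G3) `gyr[a, b]` preserves the operation -/
  gyr_op : ∀ a b x y : G, gyr a b (op x y) = op (gyr a b x) (gyr a b y)
  /-- (G3) the left gyroassociative law -/
  gyrassoc : ∀ a b c : G, op a (op b c) = op (op a b) (gyr a b c)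
  /-- (G4) the left loop property -/
  loop : ∀ a b : G, gyr (op a b) b = gyr a b

namespace Gyrogroup

variable {G : Type*} [Gyrogroup G]

theorem key (x z : G) : op (inv x) (op x z) = gyr (inv x) x z := by
  rw [gyrassoc, op_inv, op_e]

theorem L_injective (x : G) : Function.Injective (op x) := by
  intro z₁ z₂ h
  have h1 : gyr (inv x) x z₁ = gyr (inv x) x z₂ := by
    rw [← key, ← key, h]
  exact (gyr_bijective (inv x) x).1 h1

theorem L_surjective (x : G) : Function.Surjective (op x) := by
  intro w
  obtain ⟨z, hz⟩ := (gyr_bijective (inv x) x).2 (op (inv x) w)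
  exact ⟨z, L_injective (inv x) (by rw [key, hz])⟩

theorem L_bijective (x : G) : Function.Bijective (op x) :=
  ⟨L_injective x, L_surjective x⟩

/-- The left gyrotranslation `L_a : x ↦ a ⊕ x` as a permutation of `G`. -/
noncomputable def Lperm (a : G) : Equiv.Perm G := Equiv.ofBijective (op a) (L_bijective a)

/-- The gyroautomorphism `gyr[a, b]` as a permutation of `G`. -/
noncomputable def gyrPerm (a b : G) : Equiv.Perm G := Equiv.ofBijective (gyr a b) (gyr_bijective a b)

/-- `GYR(G)`: the subgroup of `Sym(G)` generated by all gyroautomorphisms. -/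
def GYR (G : Type*) [Gyrogroup G] : Subgroup (Equiv.Perm G) :=
  Subgroup.closure {π : Equiv.Perm G | ∃ a b : G, π = gyrPerm a b}

/-- `Γₘ = {L_a ∘ γ : a ∈ G, γ ∈ GYR(G)}`, a subgroup of `Sym(G)`. -/
def Γm (G : Type*) [Gyrogroup G] : Set (Equiv.Perm G) :=
  {T : Equiv.Perm G | ∃ a : G, ∃ γ ∈ GYR G, T = Lperm a * γ}

end Gyrogroup

/-- The geometry `(S, 𝒯)` is `n`-transitive: `S` has at least `n` distinct elements, and any
`n` pairwise distinct points can be mapped to any `n` pairwise distinct points by a single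
transformation of `𝒯`. -/
def IsNTransitive {S : Type*} (𝒯 : Set (Equiv.Perm S)) (n : ℕ) : Prop :=
  (∃ x : Fin n → S, Function.Injective x) ∧
    ∀ x y : Fin n → S, Function.Injective x → Function.Injective y →
      ∃ t ∈ 𝒯, ∀ i, t (x i) = y i

/-- Extend two prescribed distinct values to an injective `Fin n`-tuple, given that some
injective `Fin n`-tuple exists. -/
lemma exists_inj_prescribed {G : Type*} {n : ℕ} (hn : 2 ≤ n) (x : Fin n → G)
    (hx : Function.Injective x) (a b : G) (hab : a ≠ b) :
    ∃ g : Fin n → G, Function.Injective g ∧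
      (∀ i : Fin n, (i : ℕ) = 0 → g i = a) ∧ (∀ i : Fin n, (i : ℕ) = 1 → g i = b) := by
  classical
  have hcardim : (Finset.univ.image x).card = n := by
    rw [Finset.card_image_of_injective _ hx, Finset.card_univ, Fintype.card_fin]
  have hScard : n - 2 ≤ ((Finset.univ.image x) \ {a, b}).card := by
    have h1 := Finset.le_card_sdiff ({a, b} : Finset G) (Finset.univ.image x)
    have hle : ({a, b} : Finset G).card ≤ 2 := Finset.card_insert_le _ _ |>.trans (by simp)
    omega
  obtain ⟨T, hTS, hTcard⟩ := Finset.exists_subset_card_eq hScard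
  have haT : a ∉ T := fun h => (Finset.mem_sdiff.1 (hTS h)).2 (by simp)
  have hbT : b ∉ T := fun h => (Finset.mem_sdiff.1 (hTS h)).2 (by simp)
  set l : List G := a :: b :: T.toList with hl
  have hlen : l.length = n := by
    simp only [hl, List.length_cons, Finset.length_toList, hTcard]; omega
  have hnodup : l.Nodup := by
    refine List.nodup_cons.2 ⟨?_, List.nodup_cons.2 ⟨?_, T.nodup_toList⟩⟩
    · simp only [List.mem_cons]
      rintro (h | h)
      · exact hab h
      · exact haT (Finset.mem_toList.1 h)
    · intro h; exact hbT (Finset.mem_toList.1 h)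
  refine ⟨fun i => l.get (Fin.cast hlen.symm i), ?_, ?_, ?_⟩
  · intro i j hij
    have := List.nodup_iff_injective_get.1 hnodup hij
    exact Fin.ext (by simpa using congrArg Fin.val this)
  · intro i hi
    show l.get (Fin.cast hlen.symm i) = a
    have h2 : Fin.cast hlen.symm i = ⟨0, by rw [hlen]; omega⟩ := Fin.ext (by simpa)
    rw [h2]; rfl
  · intro i hi
    show l.get (Fin.cast hlen.symm i) = b
    have h2 : Fin.cast hlen.symm i = ⟨1, by rw [hlen]; omega⟩ := Fin.ext (by simpa)
    rw [h2]; rfl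

open Gyrogroup in
/-- Elements of `GYR G` commute with right translation by a right-nucleus element, and fix it. -/
lemma gyr_closure_fix {G : Type*} [Gyrogroup G] {c : G} (hfix : ∀ a b : G, gyr a b c = c) :
    ∀ γ ∈ GYR G, ∀ u : G, γ (op u c) = op (γ u) c := by
  intro γ hγ
  refine Subgroup.closure_induction ?_ ?_ ?_ ?_ hγ
  · rintro π ⟨a, b, rfl⟩ u
    show gyr a b (op u c) = op (gyr a b u) c
    rw [gyr_op, hfix]
  · intro u; rfl
  · intro γ δ _ _ hγ hδ u
    show γ (δ (op u c)) = op (γ (δ u)) c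
    rw [hδ, hγ]
  · intro γ _ hγ u
    have : γ (op (γ⁻¹ u) c) = op u c := by rw [hγ]; simp
    calc γ⁻¹ (op u c) = γ⁻¹ (γ (op (γ⁻¹ u) c)) := by rw [this]
    _ = op (γ⁻¹ u) c := by simp

open Gyrogroup in
lemma Γm_equivariant {G : Type*} [Gyrogroup G] {c : G} (hfix : ∀ a b : G, gyr a b c = c) :
    ∀ t ∈ Γm G, ∀ u : G, t (op u c) = op (t u) c := by
  rintro t ⟨a, γ, hγ, rfl⟩ u
  have h1 : (Lperm a * γ) (op u c) = Lperm a (γ (op u c)) := rfl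
  rw [h1, gyr_closure_fix hfix γ hγ u]
  show op a (op (γ u) c) = op (op a (γ u)) c
  rw [gyrassoc, hfix]

open Gyrogroup in
/-- Let `G` be a gyrogroup with at least three distinct elements. If the right nucleus
`N_r(G) = {c ∈ G : gyr[a,b]c = c for all a, b}` is nontrivial, then `(G, Γₘ)` is not
`n`-transitive for any `n ≥ 2`. -/
theorem stmt13 {G : Type*} [Gyrogroup G]
    (h3 : ∃ x y z : G, x ≠ y ∧ x ≠ z ∧ y ≠ z)
    (hnr : ∃ c : G, c ≠ e ∧ ∀ a b : G, gyr a b c = c) :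
    ∀ n : ℕ, 2 ≤ n → ¬ IsNTransitive (Γm G) n := by
  obtain ⟨c, hc, hfix⟩ := hnr
  intro n hn ⟨⟨x, hx⟩, htrans⟩
  obtain ⟨p, q, r, hpq, hpr, hqr⟩ := h3
  have hw : ∃ w : G, w ≠ e ∧ w ≠ c := by
    by_cases h1 : p ≠ e ∧ p ≠ c
    · exact ⟨p, h1⟩
    by_cases h2 : q ≠ e ∧ q ≠ c
    · exact ⟨q, h2⟩
    have h1' : p = e ∨ p = c := by tauto
    have h2' : q = e ∨ q = c := by tauto
    refine ⟨r, fun hre => ?_, fun hrc => ?_⟩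
    · subst hre
      have hp : p = c := h1'.resolve_left (fun h => hpr h)
      have hq : q = c := h2'.resolve_left (fun h => hqr h)
      exact hpq (hp.trans hq.symm)
    · subst hrc
      have hp : p = e := h1'.resolve_right (fun h => hpr h)
      have hq : q = e := h2'.resolve_right (fun h => hqr h)
      exact hpq (hp.trans hq.symm)
  obtain ⟨w, hwe, hwc⟩ := hw
  have hec : (e : G) ≠ c := fun h => hc h.symm
  obtain ⟨u, hu, hu0, hu1⟩ := exists_inj_prescribed hn x hx e c hec
  obtain ⟨v, hv, hv0, hv1⟩ := exists_inj_prescribed hn x hx e w (fun h => hwe h.symm)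
  obtain ⟨t, ht, hti⟩ := htrans u v hu hv
  have i0 : Fin n := ⟨0, by omega⟩
  have h0 : t e = e := by
    have h := hti ⟨0, by omega⟩
    rw [hu0 ⟨0, by omega⟩ rfl, hv0 ⟨0, by omega⟩ rfl] at h
    exact h
  have h1 : t c = w := by
    have h := hti ⟨1, by omega⟩
    rw [hu1 ⟨1, by omega⟩ rfl, hv1 ⟨1, by omega⟩ rfl] at h
    exact h
  have htc : t c = c := by
    have h := Γm_equivariant hfix t ht e
    rwa [op_e, h0, op_e] at h
  exact hwc (h1 ▸ htc)
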